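/- Let p > q > 0 be coprime integers with q even, and for j ∈ {1,…,q} define k_j = 1 + ⌊(p/q)(j−1/2) + (q−1)/(2q)⌋. Then for every j ∈ {1,…,q} one has k_j + k_{q+1−j} = p + 2. -/

import Mathlib

lemma floor_int_div_real (a b : ℤ) (hb : 0 < b) : ⌊(a : ℝ) / (b : ℝ)⌋ = a / b := by
  obtain ⟨n, rfl⟩ : ∃ n : ℕ, b = n := ⟨b.toNat, (Int.toNat_of_nonneg hb.le).symm⟩
  have h : ((a / (n : ℚ) : ℚ) : ℝ) = (a : ℝ) / ((n : ℤ) : ℝ) := by push_cast; ring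
  rw [← h, Rat.floor_cast, Rat.floor_intCast_div_natCast]

/-- for coprime `p > q > 0` with `q` even and
`k_j = 1 + ⌊(p/q)(j−1/2) + (q−1)/(2q)⌋`, one has `k_j + k_{q+1−j} = p + 2`
for every `j ∈ {1,…,q}`. -/
theorem stmt_9 (p q : ℤ) (h0q : 0 < q) (hqp : q < p) (hpq : IsCoprime p q)
    (hqeven : Even q)
    (kk : ℤ → ℤ)
    (hk : ∀ j : ℤ, kk j =
      1 + ⌊(p : ℝ) / (q : ℝ) * ((j : ℝ) - 1 / 2) + ((q : ℝ) - 1) / (2 * (q : ℝ))⌋)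
    (j : ℤ) (hj1 : 1 ≤ j) (hjq : j ≤ q) :
    kk j + kk (q + 1 - j) = p + 2 := by
  have hq0 : (q : ℝ) ≠ 0 := Int.cast_ne_zero.mpr h0q.ne'
  have h2q : (0 : ℤ) < 2 * q := by linarith
  -- rewrite the expression as a single fraction, for arbitrary i
  have key : ∀ i : ℤ, kk i = 1 + (p * (2 * i - 1) + q - 1) / (2 * q) := by
    intro i
    rw [hk i]
    congr 1
    rw [← floor_int_div_real (p * (2 * i - 1) + q - 1) (2 * q) h2q]
    congr 1
    push_cast
    field_simp
    ring
  set A : ℤ := p * (2 * j - 1) + q - 1 with hA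
  set B : ℤ := p * (2 * (q + 1 - j) - 1) + q - 1 with hB
  clear_value A B
  have hAB : A + B = 2 * q * (p + 1) - 2 := by rw [hA, hB]; ring
  have hrA := Int.emod_nonneg A h2q.ne'
  have hrB := Int.emod_nonneg B h2q.ne'
  have hrA' := Int.emod_lt_of_pos A h2q
  have hrB' := Int.emod_lt_of_pos B h2q
  have hdA := Int.mul_ediv_add_emod A (2 * q)
  have hdB := Int.mul_ediv_add_emod B (2 * q)
  -- A % (2q) ≠ 2q - 1
  have hAne : A % (2 * q) ≠ 2 * q - 1 := by
    intro h
    have hA' : 2 * q * (A / (2 * q)) + (2 * q - 1) = p * (2 * j - 1) + q - 1 := by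
      rw [← hA, ← h]; exact hdA
    have hdvd : q ∣ p * (2 * j - 1) := ⟨2 * (A / (2 * q)) + 1, by linear_combination -hA'⟩
    have hq2j : q ∣ 2 * j - 1 := (hpq.symm).dvd_of_dvd_mul_left hdvd
    have h2q' : (2 : ℤ) ∣ q := hqeven.two_dvd
    obtain ⟨t, ht⟩ := h2q'.trans hq2j
    omega
  have hAle : A % (2 * q) ≤ 2 * q - 2 := by omega
  -- the two remainders sum to 2q - 2
  obtain ⟨t, ht⟩ : 2 * q ∣ (A % (2 * q) + B % (2 * q) + 2) :=
    ⟨p + 1 - A / (2 * q) - B / (2 * q), by linear_combination hdA + hdB + hAB⟩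
  have ht1 : 1 ≤ t := by
    by_contra h
    push_neg at h
    have : 2 * q * t ≤ 0 := mul_nonpos_of_nonneg_of_nonpos h2q.le (by omega)
    linarith
  have ht2 : t ≤ 1 := by
    by_contra h
    push_neg at h
    have : 2 * q * 2 ≤ 2 * q * t := mul_le_mul_of_nonneg_left (by omega) h2q.le
    linarith
  have ht' : t = 1 := le_antisymm ht2 ht1
  rw [ht', mul_one] at ht
  have hrsum : A % (2 * q) + B % (2 * q) = 2 * q - 2 := by omega
  -- sum of quotients is p
  have hqsum : A / (2 * q) + B / (2 * q) = p := by
    have h1 : 2 * q * (A / (2 * q) + B / (2 * q)) = 2 * q * p := by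
      linear_combination hdA + hdB + hAB - hrsum
    exact mul_left_cancel₀ h2q.ne' h1
  rw [key j, key (q + 1 - j), ← hA, ← hB]
  linarith
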